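/- (Theorem 4) For random access combined with ZigZag decoding under a contention limit C ≥ 1, the expected delivery time is E[T_D(n)] = Σ_{k=1}^{n} 1/p_k, where p_k = Σ_{m=1}^{min(C,k)} binom(k, m) q_e^m (1 − q_e)^{k−m} and q_e = q(1−p). Precisely, in the contention-limited random access model described in the context, T_D(n) = T_n is almost surely finite and its expectation equals Σ_{k=1}^{n} 1/p_k. -/

import Mathlib

open MeasureTheory ProbabilityTheory

/-- The contention-limited random access acknowledgment process.
`clStep n C h ω k = (T_k, U_k)` where `T_0 = 0`, `U_0 = {1,…,n}` (all senders
unacknowledged), and for `k ≥ 0`: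
`T_{k+1} = inf { t > T_k : 1 ≤ #{ i ∈ U_k : h i t ω = 1 } ≤ C }` (the next slot in which
the number of heard unacknowledged senders is between `1` and the contention limit `C`),
and `U_{k+1}` is `U_k` minus the smallest-index heard sender at time `T_{k+1}` (that
sender is acknowledged and never transmits again). -/
noncomputable def clStep {Ω : Type*} (n C : ℕ) (h : Fin n → ℕ → Ω → Bool) (ω : Ω) :
    ℕ → ℕ × Finset (Fin n)
  | 0 => (0, Finset.univ)
  | k + 1 =>
    let prev := clStep n C h ω k
    let t := sInf {t : ℕ | prev.1 < t ∧
      1 ≤ (prev.2.filter (fun i => h i t ω = true)).card ∧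
      (prev.2.filter (fun i => h i t ω = true)).card ≤ C}
    (t, prev.2 \ prev.2.filter (fun i =>
      h i t ω = true ∧ ∀ j ∈ prev.2, h j t ω = true → i ≤ j))

open scoped ENNReal

namespace CLRA
variable {Ω : Type*} (n C : ℕ) (h : Fin n → ℕ → Ω → Bool)
noncomputable def Tk (ω : Ω) (k : ℕ) : ℕ := (clStep n C h ω k).1
noncomputable def Uk (ω : Ω) (k : ℕ) : Finset (Fin n) := (clStep n C h ω k).2
def Cond (u : Finset (Fin n)) (t : ℕ) (ω : Ω) : Prop :=
  1 ≤ (u.filter fun i => h i t ω = true).card ∧ (u.filter fun i => h i t ω = true).card ≤ C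
def SSet (k : ℕ) (ω : Ω) : Set ℕ := {t | Tk n C h ω k < t ∧ Cond n C h (Uk n C h ω k) t ω}
def Dset (k : ℕ) : Set Ω := {ω | ∀ j < k, (SSet n C h j ω).Nonempty}
lemma Tk_zero (ω : Ω) : Tk n C h ω 0 = 0 := rfl
lemma Uk_zero (ω : Ω) : Uk n C h ω 0 = Finset.univ := rfl
lemma Tk_succ (ω : Ω) (k : ℕ) : Tk n C h ω (k + 1) = sInf (SSet n C h k ω) := rfl
lemma Uk_succ (ω : Ω) (k : ℕ) : Uk n C h ω (k + 1) =
    Uk n C h ω k \ (Uk n C h ω k).filter (fun i =>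
      h i (Tk n C h ω (k+1)) ω = true ∧
        ∀ j ∈ Uk n C h ω k, h j (Tk n C h ω (k+1)) ω = true → i ≤ j) := rfl
lemma mem_Dset_succ {k : ℕ} {ω : Ω} :
    ω ∈ Dset n C h (k + 1) ↔ ω ∈ Dset n C h k ∧ (SSet n C h k ω).Nonempty := by
  constructor
  · intro hω
    exact ⟨fun j hj => hω j (hj.trans (Nat.lt_succ_self k)), hω k (Nat.lt_succ_self k)⟩
  · rintro ⟨h1, h2⟩ j hj
    rcases Nat.lt_succ_iff_lt_or_eq.mp hj with hj' | rfl
    · exact h1 j hj'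
    · exact h2
lemma Dset_mono {k l : ℕ} (hkl : k ≤ l) : Dset n C h l ⊆ Dset n C h k :=
  fun ω hω j hj => hω j (hj.trans_le hkl)

variable {n C h}

lemma removed_singleton {u : Finset (Fin n)} {t : ℕ} {ω : Ω}
    (hc : 1 ≤ (u.filter fun i => h i t ω = true).card) :
    ∃ i0 ∈ u, u.filter (fun i =>
      h i t ω = true ∧ ∀ j ∈ u, h j t ω = true → i ≤ j) = {i0} := by
  classical
  have hne : (u.filter fun i => h i t ω = true).Nonempty := Finset.card_pos.mp hc
  set F := u.filter fun i => h i t ω = true with hF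
  obtain ⟨hmem⟩ : Nonempty F := hne.to_subtype
  let i0 := F.min' hne
  have hi0F : i0 ∈ F := F.min'_mem hne
  have hi0u : i0 ∈ u := (Finset.mem_filter.mp hi0F).1
  have hi0h : h i0 t ω = true := (Finset.mem_filter.mp hi0F).2
  refine ⟨i0, hi0u, ?_⟩
  ext i
  simp only [Finset.mem_filter, Finset.mem_singleton]
  constructor
  · rintro ⟨hiu, hih, hmin⟩
    have h1 : i0 ≤ i := F.min'_le i (Finset.mem_filter.mpr ⟨hiu, hih⟩)
    exact le_antisymm (hmin i0 hi0u hi0h) h1 |>.symm ▸ rfl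
  · rintro rfl
    exact ⟨hi0u, hi0h, fun j hju hjh => F.min'_le j (Finset.mem_filter.mpr ⟨hju, hjh⟩)⟩

lemma Tk_succ_mem {k : ℕ} {ω : Ω} (hω : ω ∈ Dset n C h (k + 1)) :
    Tk n C h ω (k + 1) ∈ SSet n C h k ω := by
  rw [Tk_succ]
  exact Nat.sInf_mem ((mem_Dset_succ n C h).mp hω).2

lemma Tk_lt_succ {k : ℕ} {ω : Ω} (hω : ω ∈ Dset n C h (k + 1)) :
    Tk n C h ω k < Tk n C h ω (k + 1) := (Tk_succ_mem hω).1

lemma cond_Tk_succ {k : ℕ} {ω : Ω} (hω : ω ∈ Dset n C h (k + 1)) :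
    Cond n C h (Uk n C h ω k) (Tk n C h ω (k + 1)) ω := (Tk_succ_mem hω).2

lemma Uk_succ_eq_erase {k : ℕ} {ω : Ω} (hω : ω ∈ Dset n C h (k + 1)) :
    ∃ i0 ∈ Uk n C h ω k, Uk n C h ω (k + 1) = (Uk n C h ω k).erase i0 := by
  obtain ⟨i0, hi0, heq⟩ := removed_singleton (cond_Tk_succ hω).1
  refine ⟨i0, hi0, ?_⟩
  rw [Uk_succ, heq, Finset.sdiff_singleton_eq_erase]

lemma card_Uk {k : ℕ} {ω : Ω} (hω : ω ∈ Dset n C h k) :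
    (Uk n C h ω k).card + k = n := by
  induction k with
  | zero => simp [Uk_zero]
  | succ k ih =>
    obtain ⟨i0, hi0, heq⟩ := Uk_succ_eq_erase hω
    have hk := ih (Dset_mono n C h (Nat.le_succ k) hω)
    have hpos : 0 < (Uk n C h ω k).card := Finset.card_pos.mpr ⟨i0, hi0⟩
    rw [heq, Finset.card_erase_of_mem hi0]
    omega

lemma le_Dset_card {k : ℕ} {ω : Ω} (hω : ω ∈ Dset n C h k) : k ≤ n := by
  have := card_Uk hω; omega

lemma Tk_mono {k l : ℕ} {ω : Ω} (hkl : k ≤ l) (hω : ω ∈ Dset n C h l) :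
    Tk n C h ω k ≤ Tk n C h ω l := by
  induction l with
  | zero => simp_all
  | succ l ih =>
    rcases Nat.le_succ_iff.mp hkl with hkl' | rfl
    · exact (ih hkl' (Dset_mono n C h (Nat.le_succ l) hω)).trans
        (Tk_lt_succ hω).le
    · rfl

lemma filter_congr_of_agree {u : Finset (Fin n)} {t' : ℕ} {ω ω' : Ω}
    (hag : ∀ i, h i t' ω = h i t' ω') :
    (u.filter fun i => h i t' ω = true) = (u.filter fun i => h i t' ω' = true) := by
  apply Finset.filter_congr
  intro i _
  rw [hag i]

lemma agree {t : ℕ} {ω ω' : Ω}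
    (hag : ∀ (i : Fin n) (t' : ℕ), 1 ≤ t' → t' ≤ t → h i t' ω = h i t' ω') :
    ∀ k, ω ∈ Dset n C h k → Tk n C h ω k ≤ t →
      ω' ∈ Dset n C h k ∧ clStep n C h ω' k = clStep n C h ω k := by
  intro k
  induction k with
  | zero => exact fun _ _ => ⟨fun j hj => absurd hj (Nat.not_lt_zero j), rfl⟩
  | succ k ih =>
    intro hω hT
    have hωk : ω ∈ Dset n C h k := Dset_mono n C h (Nat.le_succ k) hω
    have hTk : Tk n C h ω k ≤ t := le_trans (Tk_lt_succ hω).le hT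
    obtain ⟨hω'k, hstep⟩ := ih hωk (le_trans (Tk_lt_succ hω).le hT)
    have hTeq : Tk n C h ω' k = Tk n C h ω k := congrArg Prod.fst hstep
    have hUeq : Uk n C h ω' k = Uk n C h ω k := congrArg Prod.snd hstep
    -- membership in SSet k agrees for times ≤ t
    have hmem : ∀ t', t' ≤ t → (t' ∈ SSet n C h k ω' ↔ t' ∈ SSet n C h k ω) := by
      intro t' ht'
      unfold SSet Cond
      rw [hTeq, hUeq]
      constructor
      · rintro ⟨h1, h2⟩
        rw [filter_congr_of_agree (fun i => (hag i t' (Nat.one_le_iff_ne_zero.mpr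
          (by omega)) ht').symm)] at h2
        exact ⟨h1, h2⟩
      · rintro ⟨h1, h2⟩
        rw [filter_congr_of_agree (fun i => hag i t' (Nat.one_le_iff_ne_zero.mpr
          (by omega)) ht')] at h2
        exact ⟨h1, h2⟩
    have hTsm := Tk_succ_mem hω
    have hne' : (SSet n C h k ω').Nonempty :=
      ⟨Tk n C h ω (k+1), (hmem _ hT).mpr hTsm⟩
    have hDs' : ω' ∈ Dset n C h (k+1) := (mem_Dset_succ n C h).mpr ⟨hω'k, hne'⟩
    have hT'le : Tk n C h ω' (k+1) ≤ Tk n C h ω (k+1) := by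
      rw [Tk_succ]
      exact Nat.sInf_le ((hmem _ hT).mpr hTsm)
    have hTeq' : Tk n C h ω' (k+1) = Tk n C h ω (k+1) := by
      refine le_antisymm hT'le ?_
      rw [show Tk n C h ω (k+1) = sInf (SSet n C h k ω) from rfl]
      exact Nat.sInf_le ((hmem _ (hT'le.trans hT)).mp (Tk_succ_mem hDs'))
    refine ⟨hDs', ?_⟩
    have h1le : 1 ≤ Tk n C h ω (k+1) := by
      have := Tk_lt_succ hω; omega
    have hagT : ∀ i, h i (Tk n C h ω (k+1)) ω' = h i (Tk n C h ω (k+1)) ω :=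
      fun i => (hag i _ h1le hT).symm
    show (Tk n C h ω' (k+1), Uk n C h ω' (k+1)) = (Tk n C h ω (k+1), Uk n C h ω (k+1))
    rw [hTeq']
    congr 1
    rw [Uk_succ, Uk_succ, hUeq, hTeq']
    congr 1
    apply Finset.filter_congr
    intro i _
    rw [hagT i]
    constructor
    · rintro ⟨h1, h2⟩
      exact ⟨h1, fun j hj hjh => h2 j hj (by rw [hagT j]; exact hjh)⟩
    · rintro ⟨h1, h2⟩
      exact ⟨h1, fun j hj hjh => h2 j hj (by rw [← hagT j]; exact hjh)⟩

section Meas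
variable [MeasurableSpace Ω]

lemma measurableSet_boolVec {ι : Type*} [Finite ι] (s : Set (ι → Bool)) :
    MeasurableSet s := by
  have hsing : ∀ v : ι → Bool, MeasurableSet {v} := by
    intro v
    have : {v} = ⋂ i, (fun w : ι → Bool => w i) ⁻¹' {v i} := by
      ext w
      simp [funext_iff]
    rw [this]
    exact MeasurableSet.iInter fun i => (measurable_pi_apply i) (by trivial)
  have : s = ⋃ v ∈ s, {v} := by simp
  rw [this]
  exact MeasurableSet.biUnion s.to_countable (fun v _ => hsing v)

lemma measurable_vecAt (hmeas : ∀ i t, Measurable (h i t)) (t : ℕ) :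
    Measurable (fun ω : Ω => (fun i : Fin n => h i t ω)) :=
  measurable_pi_lambda _ fun i => hmeas i t

/-- Any event that is a function of the heard-vector at a single time is measurable. -/
lemma measurableSet_vec (hmeas : ∀ i t, Measurable (h i t)) (t : ℕ)
    (P : (Fin n → Bool) → Prop) :
    MeasurableSet {ω : Ω | P (fun i => h i t ω)} :=
  measurable_vecAt hmeas t (measurableSet_boolVec {v | P v})

lemma measurableSet_cond (hmeas : ∀ i t, Measurable (h i t)) (u : Finset (Fin n)) (t : ℕ) :
    MeasurableSet {ω : Ω | Cond n C h u t ω} := by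
  have : {ω : Ω | Cond n C h u t ω} =
      {ω : Ω | (fun v : Fin n → Bool =>
        1 ≤ (u.filter fun i => v i = true).card ∧
          (u.filter fun i => v i = true).card ≤ C) (fun i => h i t ω)} := rfl
  rw [this]
  exact measurableSet_vec hmeas t (fun v =>
    1 ≤ (u.filter fun i => v i = true).card ∧ (u.filter fun i => v i = true).card ≤ C)

lemma nat_sInf_eq (S : Set ℕ) (t : ℕ) :
    sInf S = t ↔ ((t ∈ S ∧ ∀ s < t, s ∉ S) ∨ (t = 0 ∧ S = ∅)) := by
  constructor
  · intro hst
    by_cases hS : S.Nonempty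
    · left
      subst hst
      exact ⟨Nat.sInf_mem hS, fun s hs hsS => absurd (Nat.sInf_le hsS) (by omega)⟩
    · right
      rw [Set.not_nonempty_iff_eq_empty] at hS
      subst hS
      simp [Nat.sInf_empty] at hst ⊢
      omega
  · rintro (⟨hmem, hlt⟩ | ⟨rfl, rfl⟩)
    · refine le_antisymm (Nat.sInf_le hmem) ?_
      by_contra hc
      push_neg at hc
      exact hlt _ hc (Nat.sInf_mem ⟨t, hmem⟩)
    · exact Nat.sInf_empty

lemma measurableSet_clStep (hmeas : ∀ i t, Measurable (h i t)) (k : ℕ)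
    (x : ℕ × Finset (Fin n)) :
    MeasurableSet {ω : Ω | clStep n C h ω k = x} := by
  induction k generalizing x with
  | zero =>
    by_cases hx : ((0 : ℕ), (Finset.univ : Finset (Fin n))) = x
    · have : {ω : Ω | clStep n C h ω 0 = x} = Set.univ := by
        ext ω; simpa [clStep] using hx
      rw [this]; exact MeasurableSet.univ
    · have : {ω : Ω | clStep n C h ω 0 = x} = ∅ := by
        ext ω; simpa [clStep] using hx
      rw [this]; exact MeasurableSet.empty
  | succ k ih =>
    have hdecomp : {ω : Ω | clStep n C h ω (k+1) = x} =
        ⋃ y : ℕ × Finset (Fin n), ({ω : Ω | clStep n C h ω k = y} ∩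
          {ω : Ω | sInf {t : ℕ | y.1 < t ∧ Cond n C h y.2 t ω} = x.1} ∩
          {ω : Ω | y.2 \ y.2.filter (fun i => h i x.1 ω = true ∧
            ∀ j ∈ y.2, h j x.1 ω = true → i ≤ j) = x.2}) := by
      ext ω
      simp only [Set.mem_iUnion, Set.mem_inter_iff, Set.mem_setOf_eq]
      constructor
      · intro hx
        refine ⟨clStep n C h ω k, ⟨rfl, ?_⟩, ?_⟩
        · rw [← congrArg Prod.fst hx]; rfl
        · rw [← congrArg Prod.snd hx, ← congrArg Prod.fst hx]; rfl
      · rintro ⟨y, ⟨hy, h1⟩, h2⟩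
        show (_, _) = x
        have e1 : (clStep n C h ω (k+1)).1 = x.1 := by
          show sInf (SSet n C h k ω) = x.1
          unfold SSet
          rw [show Tk n C h ω k = y.1 from congrArg Prod.fst hy,
            show Uk n C h ω k = y.2 from congrArg Prod.snd hy]
          exact h1
        have e2 : (clStep n C h ω (k+1)).2 = x.2 := by
          rw [show (clStep n C h ω (k+1)).2 = Uk n C h ω (k+1) from rfl, Uk_succ,
            show Uk n C h ω k = y.2 from congrArg Prod.snd hy,
            show Tk n C h ω (k+1) = x.1 from e1]
          exact h2
        exact Prod.ext e1 e2
    rw [hdecomp]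
    refine MeasurableSet.iUnion fun y => ((ih y).inter ?_).inter ?_
    · -- sInf event
      have : {ω : Ω | sInf {t : ℕ | y.1 < t ∧ Cond n C h y.2 t ω} = x.1} =
          ({ω : Ω | x.1 ∈ {t : ℕ | y.1 < t ∧ Cond n C h y.2 t ω} ∧
            ∀ s < x.1, s ∉ {t : ℕ | y.1 < t ∧ Cond n C h y.2 t ω}} ∪
           {ω : Ω | x.1 = 0 ∧ {t : ℕ | y.1 < t ∧ Cond n C h y.2 t ω} = ∅}) := by
        ext ω
        rw [Set.mem_setOf_eq, nat_sInf_eq]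
        rfl
      rw [this]
      apply MeasurableSet.union
      · have : {ω : Ω | x.1 ∈ {t : ℕ | y.1 < t ∧ Cond n C h y.2 t ω} ∧
            ∀ s < x.1, s ∉ {t : ℕ | y.1 < t ∧ Cond n C h y.2 t ω}} =
            ({ω : Ω | y.1 < x.1} ∩ {ω : Ω | Cond n C h y.2 x.1 ω}) ∩
              ⋂ s ∈ Finset.range x.1, ({ω : Ω | y.1 < s} ∩ {ω : Ω | Cond n C h y.2 s ω})ᶜ := by
          ext ω
          simp only [Set.mem_setOf_eq, Set.mem_inter_iff, Set.mem_iInter, Set.mem_compl_iff,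
            Finset.mem_range]
        rw [this]
        exact (MeasurableSet.inter (MeasurableSet.const _)
            (measurableSet_cond hmeas y.2 x.1)).inter
          (MeasurableSet.biInter (Finset.range x.1).countable_toSet fun s _ =>
            ((MeasurableSet.const _).inter (measurableSet_cond hmeas y.2 s)).compl)
      · have : {ω : Ω | x.1 = 0 ∧ {t : ℕ | y.1 < t ∧ Cond n C h y.2 t ω} = ∅} =
            {ω : Ω | x.1 = 0} ∩ ⋂ t : ℕ, ({ω : Ω | y.1 < t} ∩ {ω : Ω | Cond n C h y.2 t ω})ᶜ := by
          ext ω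
          simp only [Set.mem_setOf_eq, Set.mem_inter_iff, Set.mem_iInter, Set.mem_compl_iff,
            Set.eq_empty_iff_forall_notMem]
        rw [this]
        exact (MeasurableSet.const _).inter (MeasurableSet.iInter fun t =>
          ((MeasurableSet.const _).inter (measurableSet_cond hmeas y.2 t)).compl)
    · -- removal event
      have : {ω : Ω | y.2 \ y.2.filter (fun i => h i x.1 ω = true ∧
            ∀ j ∈ y.2, h j x.1 ω = true → i ≤ j) = x.2} =
          {ω : Ω | (fun v : Fin n → Bool => y.2 \ y.2.filter (fun i => v i = true ∧
            ∀ j ∈ y.2, v j = true → i ≤ j) = x.2) (fun i => h i x.1 ω)} := rfl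
      rw [this]
      exact measurableSet_vec hmeas x.1 (fun v => y.2 \ y.2.filter (fun i => v i = true ∧
        ∀ j ∈ y.2, v j = true → i ≤ j) = x.2)

lemma measurableSet_Dset (hmeas : ∀ i t, Measurable (h i t)) (k : ℕ) :
    MeasurableSet (Dset n C h k) := by
  have : Dset n C h k = ⋂ j ∈ Finset.range k, ⋃ t : ℕ, ⋃ y : ℕ × Finset (Fin n),
      ({ω : Ω | clStep n C h ω j = y} ∩ ({ω : Ω | y.1 < t} ∩ {ω | Cond n C h y.2 t ω})) := by
    ext ω
    simp only [Set.mem_iInter, Set.mem_iUnion, Set.mem_inter_iff, Set.mem_setOf_eq,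
      Finset.mem_range, Dset, SSet]
    constructor
    · intro hω j hj
      obtain ⟨t, ht1, ht2⟩ := hω j hj
      exact ⟨t, clStep n C h ω j, rfl, ht1, ht2⟩
    · intro hω j hj
      obtain ⟨t, y, hy, ht1, ht2⟩ := hω j hj
      refine ⟨t, ?_, ?_⟩
      · rw [show Tk n C h ω j = y.1 from congrArg Prod.fst hy]; exact ht1
      · rw [show Uk n C h ω j = y.2 from congrArg Prod.snd hy]; exact ht2
  rw [this]
  exact MeasurableSet.biInter (Finset.range k).countable_toSet fun j _ =>
    MeasurableSet.iUnion fun t => MeasurableSet.iUnion fun y =>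
      (measurableSet_clStep hmeas j y).inter
        ((MeasurableSet.const _).inter (measurableSet_cond hmeas y.2 t))

/-- The elementary event `E_k(t,u) = D_k ∩ {T_k = t, U_k = u}`. -/
def Ek (n C : ℕ) (h : Fin n → ℕ → Ω → Bool) (k t : ℕ) (u : Finset (Fin n)) : Set Ω :=
  Dset n C h k ∩ {ω | clStep n C h ω k = (t, u)}

lemma measurableSet_Ek (hmeas : ∀ i t, Measurable (h i t)) (k t : ℕ) (u : Finset (Fin n)) :
    MeasurableSet (Ek n C h k t u) :=
  (measurableSet_Dset hmeas k).inter (measurableSet_clStep hmeas k (t, u))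

/-- Restriction of the noise to a finite set of (sender, slot-1) coordinates. -/
def restr (h : Fin n → ℕ → Ω → Bool) (S : Finset (Fin n × ℕ)) (ω : Ω) : S → Bool :=
  fun s => h s.1.1 (s.1.2 + 1) ω

lemma measurable_restr (hmeas : ∀ i t, Measurable (h i t)) (S : Finset (Fin n × ℕ)) :
    Measurable (restr h S) :=
  measurable_pi_lambda _ fun s => hmeas _ _

lemma exists_preimage_restr (S : Finset (Fin n × ℕ)) (A : Set Ω)
    (hA : ∀ ω ω', (∀ s ∈ S, h s.1 (s.2 + 1) ω = h s.1 (s.2 + 1) ω') → ω ∈ A → ω' ∈ A) :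
    A = restr h S ⁻¹' (restr h S '' A) := by
  apply Set.Subset.antisymm (Set.subset_preimage_image _ _)
  rintro ω' ⟨ω, hωA, hre⟩
  refine hA ω ω' (fun s hs => ?_) hωA
  exact congrFun hre ⟨s, hs⟩

section Indep
variable [MeasurableSpace Ω] {μ : Measure Ω}

lemma indep_of_determined
    (hindep : iIndepFun
      (fun it : Fin n × ℕ => h it.1 (it.2 + 1)) μ)
    (hmeas : ∀ i t, Measurable (h i t))
    (S T' : Finset (Fin n × ℕ)) (hd : Disjoint S T') (A B : Set Ω)
    (hA : ∀ ω ω', (∀ s ∈ S, h s.1 (s.2 + 1) ω = h s.1 (s.2 + 1) ω') → ω ∈ A → ω' ∈ A)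
    (hB : ∀ ω ω', (∀ s ∈ T', h s.1 (s.2 + 1) ω = h s.1 (s.2 + 1) ω') → ω ∈ B → ω' ∈ B) :
    μ (A ∩ B) = μ A * μ B := by
  have hfin := hindep.indepFun_finset S T' hd (fun it => hmeas it.1 (it.2 + 1))
  have hAeq := exists_preimage_restr (h := h) S A hA
  have hBeq := exists_preimage_restr (h := h) T' B hB
  rw [hAeq, hBeq]
  exact hfin.measure_inter_preimage_eq_mul _ _
    (measurableSet_boolVec _) (measurableSet_boolVec _)

end Indep

section Binomial
variable [MeasurableSpace Ω] {μ : Measure Ω} [IsProbabilityMeasure μ] {QQ : ℝ≥0∞}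

/-- `p_m` as an extended nonneg real. -/
noncomputable def Pval (QQ : ℝ≥0∞) (C m : ℕ) : ℝ≥0∞ :=
  ∑ m' ∈ Finset.Icc 1 (min C m), (m.choose m' : ℝ≥0∞) * QQ ^ m' * (1 - QQ) ^ (m - m')

lemma measure_heard_false (hmeas : ∀ i t, Measurable (h i t))
    (hdist : ∀ (i : Fin n) (t : ℕ), 1 ≤ t → μ {ω | h i t ω = true} = QQ)
    (i : Fin n) {t : ℕ} (ht : 1 ≤ t) :
    μ {ω | h i t ω = false} = 1 - QQ := by
  have hms : MeasurableSet {ω : Ω | h i t ω = true} := by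
    have : {ω : Ω | h i t ω = true} = h i t ⁻¹' {true} := rfl
    rw [this]
    exact hmeas i t (by trivial)
  have hc : {ω : Ω | h i t ω = false} = {ω : Ω | h i t ω = true}ᶜ := by
    ext ω; simp
  rw [hc, prob_compl_eq_one_sub hms, hdist i t ht]

lemma measure_atom
    (hindep : iIndepFun
      (fun it : Fin n × ℕ => h it.1 (it.2 + 1)) μ)
    (hmeas : ∀ i t, Measurable (h i t))
    (hdist : ∀ (i : Fin n) (t : ℕ), 1 ≤ t → μ {ω | h i t ω = true} = QQ)
    {u v : Finset (Fin n)} (hvu : v ⊆ u) {t : ℕ} (ht : 1 ≤ t) :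
    μ {ω : Ω | u.filter (fun i => h i t ω = true) = v} =
      QQ ^ v.card * (1 - QQ) ^ (u.card - v.card) := by
  classical
  have ht1 : t - 1 + 1 = t := by omega
  have hinj : ∀ a ∈ u, ∀ b ∈ u, (fun i : Fin n => (i, t - 1)) a =
      (fun i : Fin n => (i, t - 1)) b → a = b := by
    intro a _ b _ hab
    simpa using congrArg Prod.fst hab
  have hSevent : {ω : Ω | u.filter (fun i => h i t ω = true) = v} =
      ⋂ it ∈ u.image (fun i => (i, t - 1)),
        (fun ω => h it.1 (it.2 + 1) ω) ⁻¹' {decide (it.1 ∈ v)} := by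
    ext ω
    simp only [Set.mem_iInter, Finset.mem_image, Set.mem_preimage, Set.mem_singleton_iff,
      Set.mem_setOf_eq]
    constructor
    · rintro hfil it ⟨i, hiu, rfl⟩
      simp only [ht1]
      have : i ∈ v ↔ h i t ω = true := by
        rw [← hfil, Finset.mem_filter]
        exact ⟨fun hx => hx.2, fun hx => ⟨hiu, hx⟩⟩
      by_cases hiv : i ∈ v
      · simp [hiv, this.mp hiv]
      · have h2 : h i t ω = false := by
          cases hb : h i t ω
          · rfl
          · exact absurd (this.mpr hb) hiv
        simp [h2, hiv]
    · intro hall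
      ext i
      simp only [Finset.mem_filter]
      constructor
      · rintro ⟨hiu, hih⟩
        have := hall (i, t - 1) ⟨i, hiu, rfl⟩
        simp only [ht1] at this
        rw [hih] at this
        by_contra hiv
        simp [hiv] at this
      · intro hiv
        refine ⟨hvu hiv, ?_⟩
        have := hall (i, t - 1) ⟨i, hvu hiv, rfl⟩
        simp only [ht1] at this
        simp [hiv] at this
        exact this
  rw [hSevent]
  rw [hindep.measure_inter_preimage_eq_mul (u.image (fun i => (i, t - 1)))
    (sets := fun it => {decide (it.1 ∈ v)}) (fun it _ => by trivial)]
  rw [Finset.prod_image hinj]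
  have hfac : ∀ i ∈ u, μ ((fun ω => h i (t - 1 + 1) ω) ⁻¹' {decide (i ∈ v)}) =
      if i ∈ v then QQ else 1 - QQ := by
    intro i _
    by_cases hiv : i ∈ v
    · rw [if_pos hiv]
      have : ((fun ω => h i (t-1+1) ω) ⁻¹' {decide (i ∈ v)}) = {ω : Ω | h i t ω = true} := by
        ext ω; simp [ht1, hiv]
      rw [this]
      exact hdist i t ht
    · rw [if_neg hiv]
      have : ((fun ω => h i (t-1+1) ω) ⁻¹' {decide (i ∈ v)}) = {ω : Ω | h i t ω = false} := by
        ext ω; simp [ht1, hiv]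
      rw [this]
      exact measure_heard_false hmeas hdist i ht
  rw [Finset.prod_congr rfl hfac, Finset.prod_ite, Finset.prod_const, Finset.prod_const]
  congr 2
  · rw [Finset.filter_mem_eq_inter, Finset.inter_eq_right.mpr hvu]
  · rw [← Finset.sdiff_eq_filter, Finset.card_sdiff_of_subset hvu]

lemma measure_count
    (hindep : iIndepFun
      (fun it : Fin n × ℕ => h it.1 (it.2 + 1)) μ)
    (hmeas : ∀ i t, Measurable (h i t))
    (hdist : ∀ (i : Fin n) (t : ℕ), 1 ≤ t → μ {ω | h i t ω = true} = QQ)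
    (u : Finset (Fin n)) (m : ℕ) {t : ℕ} (ht : 1 ≤ t) :
    μ {ω : Ω | (u.filter (fun i => h i t ω = true)).card = m} =
      (u.card.choose m : ℝ≥0∞) * QQ ^ m * (1 - QQ) ^ (u.card - m) := by
  classical
  have hdecomp : {ω : Ω | (u.filter (fun i => h i t ω = true)).card = m} =
      ⋃ v ∈ Finset.powersetCard m u, {ω : Ω | u.filter (fun i => h i t ω = true) = v} := by
    ext ω
    simp only [Set.mem_iUnion, Set.mem_setOf_eq, Finset.mem_powersetCard]
    constructor
    · intro hc
      exact ⟨u.filter (fun i => h i t ω = true), ⟨Finset.filter_subset _ _, hc⟩, rfl⟩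
    · rintro ⟨v, ⟨_, hvc⟩, rfl⟩
      exact hvc
  rw [hdecomp, measure_biUnion_finset ?disj ?meas]
  rotate_left
  · intro v hv w hw hvw
    apply Set.disjoint_left.mpr
    rintro ω hωv hωw
    exact hvw (hωv.symm.trans hωw)
  · intro v _
    exact measurableSet_vec hmeas t (fun w => u.filter (fun i => w i = true) = v)
  have hterm : ∀ v ∈ Finset.powersetCard m u,
      μ {ω : Ω | u.filter (fun i => h i t ω = true) = v} =
        QQ ^ m * (1 - QQ) ^ (u.card - m) := by
    intro v hv
    rw [Finset.mem_powersetCard] at hv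
    rw [measure_atom hindep hmeas hdist hv.1 ht, hv.2]
  rw [Finset.sum_congr rfl hterm, Finset.sum_const, Finset.card_powersetCard, nsmul_eq_mul,
    mul_assoc]

lemma measure_cond
    (hindep : iIndepFun
      (fun it : Fin n × ℕ => h it.1 (it.2 + 1)) μ)
    (hmeas : ∀ i t, Measurable (h i t))
    (hdist : ∀ (i : Fin n) (t : ℕ), 1 ≤ t → μ {ω | h i t ω = true} = QQ)
    (u : Finset (Fin n)) {t : ℕ} (ht : 1 ≤ t) :
    μ {ω : Ω | Cond n C h u t ω} = Pval QQ C u.card := by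
  classical
  have hdecomp : {ω : Ω | Cond n C h u t ω} =
      ⋃ m ∈ Finset.Icc 1 (min C u.card),
        {ω : Ω | (u.filter (fun i => h i t ω = true)).card = m} := by
    ext ω
    simp only [Set.mem_iUnion, Set.mem_setOf_eq, Finset.mem_Icc, Cond]
    constructor
    · rintro ⟨h1, h2⟩
      exact ⟨(u.filter (fun i => h i t ω = true)).card,
        ⟨h1, le_min h2 (Finset.card_filter_le _ _)⟩, rfl⟩
    · rintro ⟨m, ⟨h1, h2⟩, h3⟩
      rw [← h3] at h1 h2
      exact ⟨h1, h2.trans (min_le_left _ _)⟩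
  rw [hdecomp, measure_biUnion_finset ?disj ?meas]
  rotate_left
  · intro a ha b hb hab
    apply Set.disjoint_left.mpr
    rintro ω hωa hωb
    exact hab (hωa.symm.trans hωb)
  · intro m _
    exact measurableSet_vec hmeas t (fun w => (u.filter (fun i => w i = true)).card = m)
  exact Finset.sum_congr rfl fun m _ => measure_count hindep hmeas hdist u m ht

end Binomial

/-- Failure window w.r.t. a fixed set `u`: no useful slot in `(a, a+s]`. -/
def Fw (n C : ℕ) (h : Fin n → ℕ → Ω → Bool) (u : Finset (Fin n)) (a s : ℕ) : Set Ω :=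
  {ω | ∀ t', a < t' → t' ≤ a + s → ¬ Cond n C h u t' ω}

lemma Fw_zero (u : Finset (Fin n)) (a : ℕ) : Fw n C h u a 0 = Set.univ := by
  ext ω
  simp only [Fw, Set.mem_setOf_eq, Set.mem_univ, iff_true]
  intro t' h1 h2
  omega

lemma Fw_succ (u : Finset (Fin n)) (a s : ℕ) :
    Fw n C h u a (s + 1) = Fw n C h u a s ∩ {ω | ¬ Cond n C h u (a + s + 1) ω} := by
  ext ω
  simp only [Fw, Set.mem_setOf_eq, Set.mem_inter_iff]
  constructor
  · intro hω
    exact ⟨fun t' h1 h2 => hω t' h1 (by omega), hω (a+s+1) (by omega) (by omega)⟩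
  · rintro ⟨h1, h2⟩ t' ht1 ht2
    rcases Nat.lt_or_ge t' (a + s + 1) with hlt | hge
    · exact h1 t' ht1 (by omega)
    · have : t' = a + s + 1 := by omega
      subst this
      exact h2

section Window
variable [MeasurableSpace Ω] {μ : Measure Ω} [IsProbabilityMeasure μ] {QQ : ℝ≥0∞}

lemma measure_Ek_inter_Fw
    (hindep : iIndepFun
      (fun it : Fin n × ℕ => h it.1 (it.2 + 1)) μ)
    (hmeas : ∀ i t, Measurable (h i t))
    (hdist : ∀ (i : Fin n) (t : ℕ), 1 ≤ t → μ {ω | h i t ω = true} = QQ)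
    (k t : ℕ) (u : Finset (Fin n)) (s : ℕ) :
    μ (Ek n C h k t u ∩ Fw n C h u t s) =
      μ (Ek n C h k t u) * (1 - Pval QQ C u.card) ^ s := by
  induction s with
  | zero => rw [Fw_zero, Set.inter_univ, pow_zero, mul_one]
  | succ s ih =>
    rw [Fw_succ, ← Set.inter_assoc]
    have hkey : μ ((Ek n C h k t u ∩ Fw n C h u t s) ∩ {ω | ¬ Cond n C h u (t + s + 1) ω}) =
        μ (Ek n C h k t u ∩ Fw n C h u t s) * μ {ω | ¬ Cond n C h u (t + s + 1) ω} := by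
      apply indep_of_determined hindep hmeas
        (Finset.univ ×ˢ Finset.range (t + s)) (Finset.univ ×ˢ {t + s})
      · -- disjoint
        rw [Finset.disjoint_left]
        rintro ⟨i, c⟩ hc1 hc2
        simp only [Finset.mem_product, Finset.mem_range, Finset.mem_singleton] at hc1 hc2
        omega
      · -- Ek ∩ Fw determined by times 1..t+s
        intro ω ω' hag hω
        have hag' : ∀ (i : Fin n) (t' : ℕ), 1 ≤ t' → t' ≤ t + s → h i t' ω = h i t' ω' := by
          intro i t' h1 h2
          have := hag (i, t' - 1) (by
            simp only [Finset.mem_product, Finset.mem_range, Finset.mem_univ, true_and]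
            omega)
          rwa [show t' - 1 + 1 = t' by omega] at this
        obtain ⟨⟨hD, hcl⟩, hFw⟩ := hω
        have hTt : Tk n C h ω k = t := congrArg Prod.fst hcl
        have hTle : Tk n C h ω k ≤ t + s := by omega
        obtain ⟨hD', hcl'⟩ := agree hag' k hD hTle
        refine ⟨⟨hD', hcl'.trans hcl⟩, ?_⟩
        intro t' h1 h2
        have hcond : ∀ ω₀ ω₁, (∀ i, h i t' ω₀ = h i t' ω₁) →
            Cond n C h u t' ω₀ → Cond n C h u t' ω₁ := by
          intro ω₀ ω₁ hagt hc
          unfold Cond at hc ⊢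
          rwa [filter_congr_of_agree hagt] at hc
        intro hc
        exact hFw t' h1 h2 (hcond ω' ω
          (fun i => (hag' i t' (by omega) (by omega)).symm) hc)
      · -- slot event determined by time t+s+1
        intro ω ω' hag hω
        have hag' : ∀ i, h i (t + s + 1) ω = h i (t + s + 1) ω' := by
          intro i
          exact hag (i, t + s) (by simp)
        simp only [Set.mem_setOf_eq] at hω ⊢
        intro hc
        apply hω
        unfold Cond at hc ⊢
        rwa [← filter_congr_of_agree hag'] at hc
    rw [hkey, ih]
    have hcompl : μ {ω : Ω | ¬ Cond n C h u (t + s + 1) ω} = 1 - Pval QQ C u.card := by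
      have : {ω : Ω | ¬ Cond n C h u (t + s + 1) ω} = {ω : Ω | Cond n C h u (t + s + 1) ω}ᶜ := by
        ext ω; simp
      rw [this, prob_compl_eq_one_sub (measurableSet_cond hmeas u (t + s + 1)),
        measure_cond hindep hmeas hdist u (by omega)]
    rw [hcompl, pow_succ, mul_assoc]

lemma Dset_inter_Fail_eq_iUnion (k s : ℕ) :
    Dset n C h k ∩
        {ω | ∀ t', Tk n C h ω k < t' → t' ≤ Tk n C h ω k + s → ¬ Cond n C h (Uk n C h ω k) t' ω} =
      ⋃ y : ℕ × Finset (Fin n), (Ek n C h k y.1 y.2 ∩ Fw n C h y.2 y.1 s) := by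
  ext ω
  simp only [Set.mem_inter_iff, Set.mem_iUnion, Set.mem_setOf_eq]
  constructor
  · rintro ⟨hD, hF⟩
    exact ⟨(Tk n C h ω k, Uk n C h ω k), ⟨hD, rfl⟩, hF⟩
  · rintro ⟨y, ⟨hD, hcl⟩, hF⟩
    have hT : Tk n C h ω k = y.1 := congrArg Prod.fst hcl
    have hU : Uk n C h ω k = y.2 := congrArg Prod.snd hcl
    refine ⟨hD, ?_⟩
    rw [hT, hU]
    exact hF

lemma pairwise_disjoint_EkFw (k s : ℕ) :
    Pairwise (Function.onFun Disjoint
      (fun y : ℕ × Finset (Fin n) => Ek n C h k y.1 y.2 ∩ Fw n C h y.2 y.1 s)) := by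
  intro y z hyz
  apply Set.disjoint_left.mpr
  rintro ω ⟨⟨_, hy⟩, _⟩ ⟨⟨_, hz⟩, _⟩
  apply hyz
  have : (y.1, y.2) = (z.1, z.2) := hy.symm.trans hz
  exact Prod.ext (congrArg Prod.fst this) (congrArg Prod.snd this)

lemma measurableSet_Fw (hmeas : ∀ i t, Measurable (h i t)) (u : Finset (Fin n)) (a s : ℕ) :
    MeasurableSet (Fw n C h u a s) := by
  have : Fw n C h u a s = ⋂ t' ∈ Finset.Icc (a + 1) (a + s), {ω : Ω | Cond n C h u t' ω}ᶜ := by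
    ext ω
    simp only [Fw, Set.mem_setOf_eq, Set.mem_iInter, Finset.mem_Icc, Set.mem_compl_iff]
    constructor
    · intro hω t' ⟨h1, h2⟩
      exact hω t' (by omega) h2
    · intro hω t' h1 h2
      exact hω t' ⟨by omega, h2⟩
  rw [this]
  exact MeasurableSet.biInter (Finset.Icc (a+1) (a+s)).countable_toSet
    (fun t' _ => (measurableSet_cond hmeas u t').compl)

lemma measure_Dset_inter_Fail
    (hindep : iIndepFun
      (fun it : Fin n × ℕ => h it.1 (it.2 + 1)) μ)
    (hmeas : ∀ i t, Measurable (h i t))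
    (hdist : ∀ (i : Fin n) (t : ℕ), 1 ≤ t → μ {ω | h i t ω = true} = QQ)
    (k s : ℕ) :
    μ (Dset n C h k ∩
        {ω | ∀ t', Tk n C h ω k < t' → t' ≤ Tk n C h ω k + s →
          ¬ Cond n C h (Uk n C h ω k) t' ω}) =
      μ (Dset n C h k) * (1 - Pval QQ C (n - k)) ^ s := by
  have hdec := Dset_inter_Fail_eq_iUnion (n := n) (C := C) (h := h) k s
  have hsum : μ (Dset n C h k ∩
      {ω | ∀ t', Tk n C h ω k < t' → t' ≤ Tk n C h ω k + s →
        ¬ Cond n C h (Uk n C h ω k) t' ω}) =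
      ∑' y : ℕ × Finset (Fin n), μ (Ek n C h k y.1 y.2 ∩ Fw n C h y.2 y.1 s) := by
    rw [hdec]
    exact measure_iUnion (pairwise_disjoint_EkFw k s)
      (fun y => (measurableSet_Ek hmeas k y.1 y.2).inter (measurableSet_Fw hmeas y.2 y.1 s))
  have hterm : ∀ y : ℕ × Finset (Fin n),
      μ (Ek n C h k y.1 y.2 ∩ Fw n C h y.2 y.1 s) =
        μ (Ek n C h k y.1 y.2) * (1 - Pval QQ C (n - k)) ^ s := by
    intro y
    rcases Set.eq_empty_or_nonempty (Ek n C h k y.1 y.2) with hE | hE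
    · rw [hE, Set.empty_inter]
      simp
    · obtain ⟨ω, hωD, hωcl⟩ := hE
      have hU : Uk n C h ω k = y.2 := congrArg Prod.snd hωcl
      have hcard : y.2.card = n - k := by
        have := card_Uk hωD
        rw [hU] at this
        omega
      rw [measure_Ek_inter_Fw hindep hmeas hdist k y.1 y.2 s, hcard]
  rw [hsum]
  simp_rw [hterm]
  rw [ENNReal.tsum_mul_right]
  congr 1
  have hD : μ (Dset n C h k) = μ (Dset n C h k ∩
      {ω | ∀ t', Tk n C h ω k < t' → t' ≤ Tk n C h ω k + 0 →
        ¬ Cond n C h (Uk n C h ω k) t' ω}) := by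
    congr 1
    ext ω
    constructor
    · intro hω
      exact ⟨hω, fun t' h1 h2 => absurd h2 (by omega)⟩
    · exact fun hω => hω.1
  rw [hD, Dset_inter_Fail_eq_iUnion k 0]
  rw [measure_iUnion (pairwise_disjoint_EkFw k 0)
    (fun y => (measurableSet_Ek hmeas k y.1 y.2).inter (measurableSet_Fw hmeas y.2 y.1 0))]
  exact tsum_congr fun y => by rw [Fw_zero, Set.inter_univ]


lemma Pval_le_one
    (hindep : iIndepFun
      (fun it : Fin n × ℕ => h it.1 (it.2 + 1)) μ)
    (hmeas : ∀ i t, Measurable (h i t))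
    (hdist : ∀ (i : Fin n) (t : ℕ), 1 ≤ t → μ {ω | h i t ω = true} = QQ)
    {m : ℕ} (hm : m ≤ n) : Pval QQ C m ≤ 1 := by
  obtain ⟨u, -, hu⟩ := Finset.exists_subset_card_eq
    (show m ≤ (Finset.univ : Finset (Fin n)).card by simpa using hm)
  rw [← hu, ← measure_cond hindep hmeas hdist u (le_refl 1)]
  exact prob_le_one

lemma Pval_ne_zero (hC : 1 ≤ C) (hQ0 : QQ ≠ 0) (hQ1 : 1 - QQ ≠ 0)
    {m : ℕ} (hm : 1 ≤ m) : Pval QQ C m ≠ 0 := by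
  have h1 : 1 ∈ Finset.Icc 1 (min C m) := by
    simp only [Finset.mem_Icc]
    omega
  have hterm : (m.choose 1 : ℝ≥0∞) * QQ ^ 1 * (1 - QQ) ^ (m - 1) ≠ 0 := by
    apply mul_ne_zero (mul_ne_zero ?_ ?_)
    · exact pow_ne_zero _ hQ1
    · simp only [Nat.choose_one_right, ne_eq, Nat.cast_eq_zero]
      omega
    · exact pow_ne_zero _ hQ0
  intro hzero
  apply hterm
  have := Finset.single_le_sum
    (f := fun m' => (m.choose m' : ℝ≥0∞) * QQ ^ m' * (1 - QQ) ^ (m - m'))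
    (fun i _ => zero_le) h1
  rw [show ∑ m' ∈ Finset.Icc 1 (min C m), (m.choose m' : ℝ≥0∞) * QQ ^ m' * (1 - QQ) ^ (m - m')
    = Pval QQ C m from rfl, hzero] at this
  exact le_antisymm this (zero_le)

lemma measure_Dset_eq_one
    (hindep : iIndepFun
      (fun it : Fin n × ℕ => h it.1 (it.2 + 1)) μ)
    (hmeas : ∀ i t, Measurable (h i t))
    (hdist : ∀ (i : Fin n) (t : ℕ), 1 ≤ t → μ {ω | h i t ω = true} = QQ)
    (hC : 1 ≤ C) (hQ0 : QQ ≠ 0) (hQ1 : 1 - QQ ≠ 0) :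
    ∀ k ≤ n, μ (Dset n C h k) = 1 := by
  intro k
  induction k with
  | zero =>
    intro _
    have : Dset n C h 0 = Set.univ := by
      ext ω
      simp only [Dset, Set.mem_setOf_eq, Set.mem_univ, iff_true]
      intro j hj
      omega
    rw [this, measure_univ]
  | succ k ih =>
    intro hk
    have hD : μ (Dset n C h k) = 1 := ih (by omega)
    set r := 1 - Pval QQ C (n - k) with hr
    have hrlt : r < 1 := ENNReal.sub_lt_self ENNReal.one_ne_top one_ne_zero
      (Pval_ne_zero hC hQ0 hQ1 (by omega))
    have hsub : ∀ s : ℕ, Dset n C h k \ Dset n C h (k + 1) ⊆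
        Dset n C h k ∩ {ω | ∀ t', Tk n C h ω k < t' → t' ≤ Tk n C h ω k + s →
          ¬ Cond n C h (Uk n C h ω k) t' ω} := by
      intro s ω hω
      obtain ⟨hωD, hωn⟩ := hω
      refine ⟨hωD, fun t' h1 _ hcond => hωn ?_⟩
      exact (mem_Dset_succ n C h).mpr ⟨hωD, ⟨t', h1, hcond⟩⟩
    have hdiff0 : μ (Dset n C h k \ Dset n C h (k + 1)) = 0 := by
      have hle : ∀ s : ℕ, μ (Dset n C h k \ Dset n C h (k + 1)) ≤ r ^ s := by
        intro s
        calc μ (Dset n C h k \ Dset n C h (k + 1)) ≤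
            μ (Dset n C h k ∩ {ω | ∀ t', Tk n C h ω k < t' → t' ≤ Tk n C h ω k + s →
              ¬ Cond n C h (Uk n C h ω k) t' ω}) := measure_mono (hsub s)
          _ = μ (Dset n C h k) * r ^ s := measure_Dset_inter_Fail hindep hmeas hdist k s
          _ ≤ 1 * r ^ s := by gcongr; exact prob_le_one
          _ = r ^ s := one_mul _
      have htend : Filter.Tendsto (fun s : ℕ => r ^ s) Filter.atTop (nhds 0) :=
        ENNReal.tendsto_pow_atTop_nhds_zero_of_lt_one hrlt
      exact le_antisymm (ge_of_tendsto' htend hle) (zero_le)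
    have hmeasD := measurableSet_Dset (n := n) (C := C) (h := h) hmeas (k + 1)
    have hsubset : Dset n C h (k + 1) ⊆ Dset n C h k := Dset_mono n C h (Nat.le_succ k)
    have := measure_diff hsubset hmeasD.nullMeasurableSet (measure_ne_top μ _)
    rw [hdiff0, hD] at this
    have hle1 : μ (Dset n C h (k + 1)) ≤ 1 := prob_le_one
    have : (1 : ℝ≥0∞) ≤ μ (Dset n C h (k + 1)) := by
      rw [← tsub_eq_zero_iff_le]
      exact this.symm
    exact le_antisymm hle1 this

lemma measure_inter_full {A X : Set Ω} (hA : MeasurableSet A) (hfull : μ A = 1) :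
    μ (X ∩ A) = μ X := by
  refine le_antisymm (measure_mono Set.inter_subset_left) ?_
  calc μ X ≤ μ (X ∩ A) + μ (X \ A) := measure_le_inter_add_diff μ X A
    _ ≤ μ (X ∩ A) + μ Aᶜ := by gcongr; exact Set.diff_subset_compl X A
    _ = μ (X ∩ A) := by rw [prob_compl_eq_one_sub hA, hfull, tsub_self, add_zero]

lemma measure_tail
    (hindep : iIndepFun
      (fun it : Fin n × ℕ => h it.1 (it.2 + 1)) μ)
    (hmeas : ∀ i t, Measurable (h i t))
    (hdist : ∀ (i : Fin n) (t : ℕ), 1 ≤ t → μ {ω | h i t ω = true} = QQ)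
    (hC : 1 ≤ C) (hQ0 : QQ ≠ 0) (hQ1 : 1 - QQ ≠ 0)
    {k : ℕ} (hk : k < n) (s : ℕ) :
    μ {ω | s < Tk n C h ω (k + 1) - Tk n C h ω k} = (1 - Pval QQ C (n - k)) ^ s := by
  have hDn : μ (Dset n C h n) = 1 :=
    measure_Dset_eq_one hindep hmeas hdist hC hQ0 hQ1 n (le_refl n)
  have hDnm := measurableSet_Dset (n := n) (C := C) (h := h) hmeas n
  rw [← measure_inter_full hDnm hDn]
  have heq : {ω | s < Tk n C h ω (k + 1) - Tk n C h ω k} ∩ Dset n C h n =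
      (Dset n C h k ∩ {ω | ∀ t', Tk n C h ω k < t' → t' ≤ Tk n C h ω k + s →
        ¬ Cond n C h (Uk n C h ω k) t' ω}) ∩ Dset n C h n := by
    ext ω
    simp only [Set.mem_inter_iff, Set.mem_setOf_eq]
    constructor
    · rintro ⟨hs, hDω⟩
      have hDk1 : ω ∈ Dset n C h (k + 1) := Dset_mono n C h (by omega) hDω
      have hTT : Tk n C h ω k + s < Tk n C h ω (k + 1) := by omega
      refine ⟨⟨Dset_mono n C h (by omega) hDω, fun t' h1 h2 hcond => ?_⟩, hDω⟩
      have : Tk n C h ω (k + 1) ≤ t' := by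
        rw [Tk_succ]
        exact Nat.sInf_le ⟨h1, hcond⟩
      omega
    · rintro ⟨⟨hDk, hfail⟩, hDω⟩
      have hDk1 : ω ∈ Dset n C h (k + 1) := Dset_mono n C h (by omega) hDω
      have hmem := Tk_succ_mem hDk1
      have hTT : Tk n C h ω k + s < Tk n C h ω (k + 1) := by
        by_contra hcon
        push_neg at hcon
        exact hfail _ hmem.1 hcon hmem.2
      exact ⟨by omega, hDω⟩
  rw [heq]
  rw [measure_inter_full hDnm hDn]
  rw [measure_Dset_inter_Fail hindep hmeas hdist k s,
    measure_Dset_eq_one hindep hmeas hdist hC hQ0 hQ1 k (by omega), one_mul]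


lemma measurable_Tk (hmeas : ∀ i t, Measurable (h i t)) (k : ℕ) :
    Measurable (fun ω : Ω => Tk n C h ω k) := by
  apply measurable_to_countable'
  intro t
  have : (fun ω : Ω => Tk n C h ω k) ⁻¹' {t} =
      ⋃ u : Finset (Fin n), {ω : Ω | clStep n C h ω k = (t, u)} := by
    ext ω
    simp only [Set.mem_preimage, Set.mem_singleton_iff, Set.mem_iUnion, Set.mem_setOf_eq]
    constructor
    · intro hT
      exact ⟨Uk n C h ω k, Prod.ext hT rfl⟩
    · rintro ⟨u, hu⟩
      exact congrArg Prod.fst hu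
  rw [this]
  exact MeasurableSet.iUnion fun u => measurableSet_clStep hmeas k (t, u)

lemma measurable_gk (hmeas : ∀ i t, Measurable (h i t)) (k : ℕ) :
    Measurable (fun ω : Ω => Tk n C h ω (k + 1) - Tk n C h ω k) :=
  (measurable_of_countable (fun st : ℕ × ℕ => st.1 - st.2)).comp
    ((measurable_Tk hmeas (k + 1)).prodMk (measurable_Tk hmeas k))

lemma lintegral_nat_tail {f : Ω → ℕ} (hf : Measurable f) :
    ∫⁻ ω, (f ω : ℝ≥0∞) ∂μ = ∑' s : ℕ, μ {ω | s < f ω} := by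
  have key : ∀ m : ℕ, (m : ℝ≥0∞) = ∑' s : ℕ, if s < m then 1 else 0 := by
    intro m
    rw [tsum_eq_sum (s := Finset.range m) (f := fun s => if s < m then (1 : ℝ≥0∞) else 0)
      (fun b hb => by
        rw [Finset.mem_range, not_lt] at hb
        simp [Nat.not_lt.mpr hb])]
    rw [Finset.sum_congr rfl (fun s hs => if_pos (Finset.mem_range.mp hs)),
      Finset.sum_const, Finset.card_range, nsmul_eq_mul, mul_one]
  have hmeasset : ∀ s : ℕ, MeasurableSet {ω : Ω | s < f ω} :=
    fun s => hf (show MeasurableSet {t : ℕ | s < t} from trivial)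
  calc ∫⁻ ω, (f ω : ℝ≥0∞) ∂μ
      = ∫⁻ ω, ∑' s : ℕ, Set.indicator {ω : Ω | s < f ω} (fun _ => 1) ω ∂μ := by
        apply lintegral_congr
        intro ω
        rw [key (f ω)]
        exact tsum_congr fun s => by
          rw [Set.indicator_apply]
          by_cases hs : s < f ω <;> simp [hs]
    _ = ∑' s : ℕ, ∫⁻ ω, Set.indicator {ω : Ω | s < f ω} (fun _ => 1) ω ∂μ :=
        lintegral_tsum fun s =>
          (measurable_const.indicator (hmeasset s)).aemeasurable
    _ = ∑' s : ℕ, μ {ω : Ω | s < f ω} := by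
        refine tsum_congr fun s => ?_
        exact lintegral_indicator_one (hmeasset s)

lemma telescope {ω : Ω} (hω : ω ∈ Dset n C h n) :
    Tk n C h ω n = ∑ k ∈ Finset.range n, (Tk n C h ω (k + 1) - Tk n C h ω k) := by
  suffices hgen : ∀ m ≤ n, Tk n C h ω m =
      ∑ k ∈ Finset.range m, (Tk n C h ω (k + 1) - Tk n C h ω k) from hgen n (le_refl n)
  intro m
  induction m with
  | zero => intro _; simp [Tk_zero]
  | succ m ih =>
    intro hm
    have hω' : ω ∈ Dset n C h (m + 1) := Dset_mono n C h hm hω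
    have hle : Tk n C h ω m ≤ Tk n C h ω (m + 1) := (Tk_lt_succ hω').le
    rw [Finset.sum_range_succ, ← ih (by omega), Nat.add_sub_cancel' hle]

lemma lintegral_Tn
    (hindep : iIndepFun
      (fun it : Fin n × ℕ => h it.1 (it.2 + 1)) μ)
    (hmeas : ∀ i t, Measurable (h i t))
    (hdist : ∀ (i : Fin n) (t : ℕ), 1 ≤ t → μ {ω | h i t ω = true} = QQ)
    (hC : 1 ≤ C) (hQ0 : QQ ≠ 0) (hQ1 : 1 - QQ ≠ 0) :
    ∫⁻ ω, (Tk n C h ω n : ℝ≥0∞) ∂μ = ∑ k ∈ Finset.range n, (Pval QQ C (n - k))⁻¹ := by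
  have hDn : μ (Dset n C h n) = 1 :=
    measure_Dset_eq_one hindep hmeas hdist hC hQ0 hQ1 n (le_refl n)
  have hae : ∀ᵐ ω ∂μ, ω ∈ Dset n C h n := by
    rw [ae_iff]
    have : {ω : Ω | ¬ ω ∈ Dset n C h n} = (Dset n C h n)ᶜ := rfl
    rw [this, prob_compl_eq_one_sub (measurableSet_Dset hmeas n), hDn, tsub_self]
  calc ∫⁻ ω, (Tk n C h ω n : ℝ≥0∞) ∂μ
      = ∫⁻ ω, ∑ k ∈ Finset.range n, ((Tk n C h ω (k + 1) - Tk n C h ω k : ℕ) : ℝ≥0∞) ∂μ := by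
        apply lintegral_congr_ae
        filter_upwards [hae] with ω hω
        rw [telescope hω]
        push_cast
        rfl
    _ = ∑ k ∈ Finset.range n, ∫⁻ ω, ((Tk n C h ω (k + 1) - Tk n C h ω k : ℕ) : ℝ≥0∞) ∂μ :=
        lintegral_finset_sum _ fun k _ =>
          (measurable_from_top (f := (Nat.cast : ℕ → ℝ≥0∞))).comp (measurable_gk hmeas k)
    _ = ∑ k ∈ Finset.range n, (Pval QQ C (n - k))⁻¹ := by
        refine Finset.sum_congr rfl fun k hk => ?_
        have hkn : k < n := Finset.mem_range.mp hk
        rw [lintegral_nat_tail (measurable_gk hmeas k)]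
        have : ∀ s : ℕ, μ {ω : Ω | s < Tk n C h ω (k + 1) - Tk n C h ω k} =
            (1 - Pval QQ C (n - k)) ^ s :=
          fun s => measure_tail hindep hmeas hdist hC hQ0 hQ1 hkn s
        rw [tsum_congr this, ENNReal.tsum_geometric,
          ENNReal.sub_sub_cancel ENNReal.one_ne_top
            (Pval_le_one hindep hmeas hdist (by omega))]

end Window
end Meas
end CLRA

open CLRA

/-- **Theorem 4 (random access with ZigZag decoding).** In the contention-limited random
access model with `n` senders, erasure probability `p ∈ (0,1)`, access probability
`q ∈ (0,1]`, `q_e = q(1-p)`, and contention limit `C ≥ 1`, where the indicators `h i t`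
that sender `i` is heard in slot `t ≥ 1` are i.i.d. with `P(h i t = 1) = q_e`, the
delivery time `T_D(n) = T_n = (clStep n C h ω n).1` is almost surely finite (each set
whose infimum defines `T_{k+1}` is a.s. nonempty) and
`E[T_D(n)] = ∑_{k=1}^n 1/p_k` where
`p_k = ∑_{m=1}^{min(C,k)} binom(k,m) q_e^m (1-q_e)^{k-m}`. -/
theorem contention_limited_random_access_delivery_time
    {Ω : Type*} [MeasurableSpace Ω] (μ : Measure Ω) [IsProbabilityMeasure μ]
    (p q : ℝ) (hp0 : 0 < p) (hp1 : p < 1) (hq0 : 0 < q) (hq1 : q ≤ 1)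
    (n C : ℕ) (hn : 1 ≤ n) (hC : 1 ≤ C)
    (h : Fin n → ℕ → Ω → Bool) (hmeas : ∀ i t, Measurable (h i t))
    (hindep : iIndepFun
      (fun it : Fin n × ℕ => h it.1 (it.2 + 1)) μ)
    (hdist : ∀ (i : Fin n) (t : ℕ), 1 ≤ t →
      μ {ω | h i t ω = true} = ENNReal.ofReal (q * (1 - p))) :
    (∀ᵐ ω ∂μ, ∀ k < n,
      {t : ℕ | (clStep n C h ω k).1 < t ∧
        1 ≤ ((clStep n C h ω k).2.filter (fun i => h i t ω = true)).card ∧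
        ((clStep n C h ω k).2.filter (fun i => h i t ω = true)).card ≤ C}.Nonempty) ∧
    ∫ ω, ((clStep n C h ω n).1 : ℝ) ∂μ =
      ∑ k ∈ Finset.Icc 1 n,
        1 / (∑ m ∈ Finset.Icc 1 (min C k),
          (k.choose m : ℝ) * (q * (1 - p)) ^ m * (1 - q * (1 - p)) ^ (k - m)) := by
  set qe : ℝ := q * (1 - p) with hqe
  have hqe0 : 0 < qe := mul_pos hq0 (by linarith)
  have hqe1 : qe < 1 := by
    calc qe ≤ 1 * (1 - p) := by
          apply mul_le_mul_of_nonneg_right hq1 (by linarith)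
      _ < 1 := by linarith
  set QQ : ℝ≥0∞ := ENNReal.ofReal qe with hQQ
  have hQ0 : QQ ≠ 0 := by
    rw [hQQ, ne_eq, ENNReal.ofReal_eq_zero, not_le]
    exact hqe0
  have hQlt1 : QQ < 1 := by
    rw [hQQ]
    exact ENNReal.ofReal_lt_one.mpr hqe1
  have hQ1 : (1 : ℝ≥0∞) - QQ ≠ 0 := by
    rw [ne_eq, tsub_eq_zero_iff_le, not_le]
    exact hQlt1
  have hdist' : ∀ (i : Fin n) (t : ℕ), 1 ≤ t → μ {ω | h i t ω = true} = QQ := hdist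
  have hDn : μ (Dset n C h n) = 1 :=
    measure_Dset_eq_one hindep hmeas hdist' hC hQ0 hQ1 n (le_refl n)
  have hae : ∀ᵐ ω ∂μ, ω ∈ Dset n C h n := by
    rw [Filter.eventually_iff, mem_ae_iff]
    have : {ω : Ω | ω ∈ Dset n C h n}ᶜ = (Dset n C h n)ᶜ := rfl
    rw [this, prob_compl_eq_one_sub (measurableSet_Dset hmeas n), hDn, tsub_self]
  constructor
  · filter_upwards [hae] with ω hω k hk
    exact hω k hk
  · -- the expectation computation
    set preal : ℕ → ℝ := fun m => ∑ m' ∈ Finset.Icc 1 (min C m),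
      (m.choose m' : ℝ) * qe ^ m' * (1 - qe) ^ (m - m') with hpreal
    have hterm_nonneg : ∀ m m' : ℕ,
        0 ≤ (m.choose m' : ℝ) * qe ^ m' * (1 - qe) ^ (m - m') := by
      intro m m'
      apply mul_nonneg (mul_nonneg (Nat.cast_nonneg _) (pow_nonneg hqe0.le _))
        (pow_nonneg (by linarith) _)
    have hPval_ofReal : ∀ m : ℕ, Pval QQ C m = ENNReal.ofReal (preal m) := by
      intro m
      rw [hpreal]
      rw [ENNReal.ofReal_sum_of_nonneg (fun m' _ => hterm_nonneg m m')]
      refine Finset.sum_congr rfl fun m' _ => ?_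
      rw [ENNReal.ofReal_mul (by positivity), ENNReal.ofReal_mul (by positivity),
        ENNReal.ofReal_pow hqe0.le, ENNReal.ofReal_pow (by linarith),
        ENNReal.ofReal_natCast]
      congr 1
      rw [show (1 : ℝ≥0∞) - QQ = ENNReal.ofReal (1 - qe) by
        rw [ENNReal.ofReal_sub 1 hqe0.le, ENNReal.ofReal_one]]
    have hpreal_pos : ∀ m : ℕ, 1 ≤ m → 0 < preal m := by
      intro m hm
      apply Finset.sum_pos'
      · intro m' _
        exact hterm_nonneg m m'
      · refine ⟨1, by simp only [Finset.mem_Icc]; omega, ?_⟩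
        have h1 : (0:ℝ) < (m.choose 1 : ℝ) := by
          rw [Nat.choose_one_right]
          exact_mod_cast Nat.pos_of_ne_zero (by omega)
        have h2 : (0:ℝ) < qe ^ 1 := by positivity
        have h3 : (0:ℝ) < (1 - qe) ^ (m - 1) := by
          apply pow_pos
          linarith
        positivity
    have hTk_meas : Measurable (fun ω : Ω => ((Tk n C h ω n : ℕ) : ℝ)) :=
      (measurable_from_top (f := (Nat.cast : ℕ → ℝ))).comp (measurable_Tk hmeas n)
    have hint : ∫ ω, ((clStep n C h ω n).1 : ℝ) ∂μ =
        (∫⁻ ω, (Tk n C h ω n : ℝ≥0∞) ∂μ).toReal := by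
      rw [show (fun ω : Ω => ((clStep n C h ω n).1 : ℝ)) =
        (fun ω : Ω => ((Tk n C h ω n : ℕ) : ℝ)) from rfl]
      rw [integral_eq_lintegral_of_nonneg_ae
        (Filter.Eventually.of_forall fun ω => Nat.cast_nonneg _)
        hTk_meas.aestronglyMeasurable]
      congr 1
      apply lintegral_congr
      intro ω
      rw [ENNReal.ofReal_natCast]
    rw [hint, lintegral_Tn hindep hmeas hdist' hC hQ0 hQ1]
    have hreindex : ∑ k ∈ Finset.range n, (Pval QQ C (n - k))⁻¹ =
        ∑ m ∈ Finset.Icc 1 n, (Pval QQ C m)⁻¹ := by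
      apply Finset.sum_nbij' (i := fun k => n - k) (j := fun m => n - m)
      · intro k hk
        rw [Finset.mem_range] at hk
        rw [Finset.mem_Icc]
        omega
      · intro m hm
        rw [Finset.mem_Icc] at hm
        rw [Finset.mem_range]
        omega
      · intro k hk
        rw [Finset.mem_range] at hk
        omega
      · intro m hm
        rw [Finset.mem_Icc] at hm
        omega
      · intro k _
        rfl
    rw [hreindex]
    rw [ENNReal.toReal_sum (fun m hm => by
      rw [Finset.mem_Icc] at hm
      exact ENNReal.inv_ne_top.mpr (Pval_ne_zero hC hQ0 hQ1 hm.1))]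
    refine Finset.sum_congr rfl fun m hm => ?_
    rw [Finset.mem_Icc] at hm
    rw [hPval_ofReal m, ← ENNReal.ofReal_inv_of_pos (hpreal_pos m hm.1),
      ENNReal.toReal_ofReal (inv_nonneg.mpr (hpreal_pos m hm.1).le), one_div]
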